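/- Let (Ω, μ) be a measure space and let 𝒯 be a finite collection of pairwise disjoint measurable subsets of Ω whose union is Ω. Let g : Ω → ℝ^{2×2} be measurable with integrable entries, let N ≥ 1, and let G⁰, G¹, …, G^N : Ω → ℝ^{3×2} be measurable with square-integrable entries. Set δ^{n+1} := G^{n+1} − G^n and assume the linearized metric constraint: for every n = 0, …, N−1 and every T ∈ 𝒯, ∫_T ((δ^{n+1})ᵀ G^n + (G^n)ᵀ δ^{n+1}) dμ = 0 (the zero 2×2 matrix). Then Σ_{T ∈ 𝒯} ‖∫_T ((G^N)ᵀ G^N − g) dμ‖_F ≤ Σ_{T ∈ 𝒯} ‖∫_T ((G⁰)ᵀ G⁰ − g) dμ‖_F + Σ_{n=0}^{N−1} ∫_Ω ‖δ^{n+1}‖_F² dμ. -/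

import Mathlib

open MeasureTheory Matrix

/-- The square of the Frobenius norm of a real matrix. -/
noncomputable def frobNormSq {m n : Type*} [Fintype m] [Fintype n]
    (A : Matrix m n ℝ) : ℝ :=
  ∑ i, ∑ j, (A i j) ^ 2

/-- The Frobenius norm of a real matrix. -/
noncomputable def frobNorm {m n : Type*} [Fintype m] [Fintype n]
    (A : Matrix m n ℝ) : ℝ :=
  Real.sqrt (frobNormSq A)

section aux
variable {m n : Type*} [Fintype m] [Fintype n]

lemma frobNormSq_nonneg (A : Matrix m n ℝ) : 0 ≤ frobNormSq A :=
  Finset.sum_nonneg fun _ _ => Finset.sum_nonneg fun _ _ => sq_nonneg _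

lemma frobNorm_nonneg (A : Matrix m n ℝ) : 0 ≤ frobNorm A := Real.sqrt_nonneg _

lemma frobNorm_mul_self (A : Matrix m n ℝ) : frobNorm A * frobNorm A = frobNormSq A :=
  Real.mul_self_sqrt (frobNormSq_nonneg A)

lemma pairing_le (A B : Matrix m n ℝ) :
    ∑ k, ∑ l, A k l * B k l ≤ frobNorm A * frobNorm B := by
  have h := Finset.sum_mul_sq_le_sq_mul_sq Finset.univ
    (fun p : m × n => A p.1 p.2) (fun p : m × n => B p.1 p.2)
  have e1 : ∑ p : m × n, A p.1 p.2 * B p.1 p.2 = ∑ k, ∑ l, A k l * B k l :=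
    Fintype.sum_prod_type _
  have e2 : ∑ p : m × n, A p.1 p.2 ^ 2 = frobNormSq A := Fintype.sum_prod_type _
  have e3 : ∑ p : m × n, B p.1 p.2 ^ 2 = frobNormSq B := Fintype.sum_prod_type _
  rw [e1, e2, e3] at h
  calc ∑ k, ∑ l, A k l * B k l ≤ |∑ k, ∑ l, A k l * B k l| := le_abs_self _
    _ = Real.sqrt ((∑ k, ∑ l, A k l * B k l) ^ 2) := (Real.sqrt_sq_eq_abs _).symm
    _ ≤ Real.sqrt (frobNormSq A * frobNormSq B) := Real.sqrt_le_sqrt h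
    _ = frobNorm A * frobNorm B := Real.sqrt_mul (frobNormSq_nonneg A) _

lemma frobNorm_add_le (A B : Matrix m n ℝ) :
    frobNorm (A + B) ≤ frobNorm A + frobNorm B := by
  have expand : frobNormSq (A + B) =
      frobNormSq A + 2 * (∑ k, ∑ l, A k l * B k l) + frobNormSq B := by
    unfold frobNormSq
    rw [Finset.mul_sum, ← Finset.sum_add_distrib, ← Finset.sum_add_distrib]
    refine Finset.sum_congr rfl fun k _ => ?_
    rw [Finset.mul_sum, ← Finset.sum_add_distrib, ← Finset.sum_add_distrib]
    refine Finset.sum_congr rfl fun l _ => ?_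
    simp only [Matrix.add_apply]
    ring
  have hp := pairing_le A B
  have h1 : frobNormSq (A + B) ≤ (frobNorm A + frobNorm B) ^ 2 := by
    have hA := frobNorm_mul_self A
    have hB := frobNorm_mul_self B
    nlinarith
  calc frobNorm (A + B) = Real.sqrt (frobNormSq (A + B)) := rfl
    _ ≤ Real.sqrt ((frobNorm A + frobNorm B) ^ 2) := Real.sqrt_le_sqrt h1
    _ = |frobNorm A + frobNorm B| := Real.sqrt_sq_eq_abs _
    _ = frobNorm A + frobNorm B := abs_of_nonneg (add_nonneg (frobNorm_nonneg A) (frobNorm_nonneg B))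

lemma frobNorm_transpose_mul_self_le {p : Type*} [Fintype p] (A : Matrix p n ℝ) :
    frobNorm (Aᵀ * A) ≤ frobNormSq A := by
  have h : frobNormSq (Aᵀ * A) ≤ (frobNormSq A) ^ 2 := by
    have hkl : ∀ k l, ((Aᵀ * A) k l) ^ 2 ≤ (∑ j, A j k ^ 2) * (∑ j, A j l ^ 2) := by
      intro k l
      have := Finset.sum_mul_sq_le_sq_mul_sq Finset.univ (fun j => A j k) (fun j => A j l)
      simpa [Matrix.mul_apply, Matrix.transpose_apply] using this
    calc frobNormSq (Aᵀ * A) ≤ ∑ k, ∑ l, (∑ j, A j k ^ 2) * (∑ j, A j l ^ 2) := by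
          refine Finset.sum_le_sum fun k _ => Finset.sum_le_sum fun l _ => hkl k l
      _ = (∑ k, ∑ j, A j k ^ 2) * (∑ l, ∑ j, A j l ^ 2) := by
          rw [← Finset.sum_mul_sum]
      _ = (frobNormSq A) ^ 2 := by
          rw [Finset.sum_comm]; unfold frobNormSq; ring
  calc frobNorm (Aᵀ * A) = Real.sqrt (frobNormSq (Aᵀ * A)) := rfl
    _ ≤ Real.sqrt ((frobNormSq A) ^ 2) := Real.sqrt_le_sqrt h
    _ = |frobNormSq A| := Real.sqrt_sq_eq_abs _
    _ = frobNormSq A := abs_of_nonneg (frobNormSq_nonneg A)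

variable {Ω : Type*} [MeasurableSpace Ω] {μ : Measure Ω}

lemma int_mul {f g : Ω → ℝ} (hf : Measurable f) (hg : Measurable g)
    (hf2 : Integrable (fun x => f x ^ 2) μ) (hg2 : Integrable (fun x => g x ^ 2) μ) :
    Integrable (fun x => f x * g x) μ := by
  refine Integrable.mono' ((hf2.add hg2).div_const 2)
    ((hf.mul hg).aestronglyMeasurable) ?_
  filter_upwards with x
  rw [Real.norm_eq_abs, abs_le]
  simp only [Pi.add_apply]
  constructor <;> nlinarith [sq_nonneg (f x + g x), sq_nonneg (f x - g x)]

lemma frobNorm_integral_le {f : Ω → Matrix m n ℝ}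
    (hint : ∀ k l, Integrable (fun x => f x k l) μ)
    (hnorm : Integrable (fun x => frobNorm (f x)) μ) :
    frobNorm (Matrix.of fun k l => ∫ x, f x k l ∂μ) ≤ ∫ x, frobNorm (f x) ∂μ := by
  set C : Matrix m n ℝ := Matrix.of fun k l => ∫ x, f x k l ∂μ with hC
  have hCnn := frobNorm_nonneg C
  have hInn : (0:ℝ) ≤ ∫ x, frobNorm (f x) ∂μ :=
    integral_nonneg fun x => frobNorm_nonneg _
  rcases eq_or_lt_of_le hCnn with h0 | h0
  · rw [← h0]; exact hInn
  have hS : frobNormSq C = ∫ x, ∑ k, ∑ l, C k l * f x k l ∂μ := by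
    rw [integral_finset_sum _ (fun k _ => integrable_finset_sum _
      (fun l _ => (hint k l).const_mul (C k l)))]
    unfold frobNormSq
    refine Finset.sum_congr rfl fun k _ => ?_
    rw [integral_finset_sum _ (fun l _ => (hint k l).const_mul (C k l))]
    refine Finset.sum_congr rfl fun l _ => ?_
    rw [integral_const_mul]
    simp [hC, sq]
  have hle : ∫ x, ∑ k, ∑ l, C k l * f x k l ∂μ ≤ ∫ x, frobNorm C * frobNorm (f x) ∂μ := by
    refine integral_mono ?_ (hnorm.const_mul _) (fun x => pairing_le C (f x))
    exact integrable_finset_sum _ fun k _ => integrable_finset_sum _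
      fun l _ => (hint k l).const_mul _
  rw [integral_const_mul] at hle
  have : frobNorm C * frobNorm C ≤ frobNorm C * ∫ x, frobNorm (f x) ∂μ := by
    rw [frobNorm_mul_self]; exact hS ▸ hle
  exact le_of_mul_le_mul_left this h0

end aux

/-- Core of Proposition 5.2 (control of metric defect): if consecutive gradient fields
`G n` satisfy the linearized metric constraint elementwise over a finite measurable
partition `T` of `Ω`, the metric defect of `G N` is controlled by the initial defect
plus the accumulated squared increments. -/
theorem stmt_4 {Ω : Type*} [MeasurableSpace Ω] (μ : Measure Ω)
    {ι : Type*} [Fintype ι] (T : ι → Set Ω)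
    (hTmeas : ∀ i, MeasurableSet (T i))
    (hTdisj : Pairwise (Function.onFun Disjoint T))
    (hTcover : (⋃ i, T i) = Set.univ)
    (g : Ω → Matrix (Fin 2) (Fin 2) ℝ)
    (hgmeas : ∀ i j, Measurable fun x => g x i j)
    (hgint : ∀ i j, Integrable (fun x => g x i j) μ)
    (N : ℕ) (hN : 1 ≤ N)
    (G : ℕ → Ω → Matrix (Fin 3) (Fin 2) ℝ)
    (hGmeas : ∀ n, n ≤ N → ∀ i j, Measurable fun x => G n x i j)
    (hGsq : ∀ n, n ≤ N → ∀ i j, Integrable (fun x => (G n x i j) ^ 2) μ)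
    (hconstraint : ∀ n < N, ∀ i,
      (Matrix.of (fun k l => ∫ x in T i,
        ((G (n + 1) x - G n x)ᵀ * G n x + (G n x)ᵀ * (G (n + 1) x - G n x)) k l ∂μ))
        = (0 : Matrix (Fin 2) (Fin 2) ℝ)) :
    ∑ i, frobNorm (Matrix.of (fun k l => ∫ x in T i, ((G N x)ᵀ * G N x - g x) k l ∂μ)) ≤
      ∑ i, frobNorm (Matrix.of (fun k l => ∫ x in T i, ((G 0 x)ᵀ * G 0 x - g x) k l ∂μ)) +
        ∑ n ∈ Finset.range N, ∫ x, frobNormSq (G (n + 1) x - G n x) ∂μ := by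
  -- measurability of increment entries
  have hdm : ∀ n < N, ∀ i j, Measurable fun x => (G (n + 1) x - G n x) i j := by
    intro n hn i j
    have := (hGmeas (n + 1) hn i j).sub (hGmeas n hn.le i j)
    exact this
  -- square-integrability of increment entries
  have hdsq : ∀ n < N, ∀ i j, Integrable (fun x => ((G (n + 1) x - G n x) i j) ^ 2) μ := by
    intro n hn i j
    have h1 := hGsq (n + 1) hn i j
    have h2 := hGsq n hn.le i j
    refine Integrable.mono' ((h1.const_mul 2).add (h2.const_mul 2))
      ((hdm n hn i j).pow_const 2).aestronglyMeasurable ?_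
    filter_upwards with x
    rw [Real.norm_eq_abs, abs_of_nonneg (sq_nonneg _)]
    simp only [Matrix.sub_apply, Pi.add_apply]
    nlinarith [sq_nonneg (G (n + 1) x i j + G n x i j)]
  -- integrability of entries of (G n)ᵀ G n - g
  have hP : ∀ n ≤ N, ∀ k l, Integrable (fun x => ((G n x)ᵀ * G n x - g x) k l) μ := by
    intro n hn k l
    have : Integrable (fun x => (∑ j, G n x j k * G n x j l) - g x k l) μ :=
      (integrable_finset_sum _ fun j _ =>
        int_mul (hGmeas n hn j k) (hGmeas n hn j l) (hGsq n hn j k) (hGsq n hn j l)).sub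
        (hgint k l)
    simpa [Matrix.sub_apply, Matrix.mul_apply, Matrix.transpose_apply] using this
  -- integrability of entries of dᵀ d
  have hQ : ∀ n < N, ∀ k l,
      Integrable (fun x => ((G (n + 1) x - G n x)ᵀ * (G (n + 1) x - G n x)) k l) μ := by
    intro n hn k l
    have : Integrable (fun x => ∑ j, (G (n + 1) x - G n x) j k * (G (n + 1) x - G n x) j l) μ :=
      integrable_finset_sum _ fun j _ =>
        int_mul (hdm n hn j k) (hdm n hn j l) (hdsq n hn j k) (hdsq n hn j l)
    simpa [Matrix.mul_apply, Matrix.transpose_apply] using this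
  -- integrability of entries of the middle (constraint) term
  have hM : ∀ n < N, ∀ k l,
      Integrable (fun x =>
        ((G (n + 1) x - G n x)ᵀ * G n x + (G n x)ᵀ * (G (n + 1) x - G n x)) k l) μ := by
    intro n hn k l
    have : Integrable (fun x =>
        (∑ j, (G (n + 1) x - G n x) j k * G n x j l)
        + ∑ j, G n x j k * (G (n + 1) x - G n x) j l) μ :=
      (integrable_finset_sum _ fun j _ =>
        int_mul (hdm n hn j k) (hGmeas n hn.le j l) (hdsq n hn j k) (hGsq n hn.le j l)).add
      (integrable_finset_sum _ fun j _ =>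
        int_mul (hGmeas n hn.le j k) (hdm n hn j l) (hGsq n hn.le j k) (hdsq n hn j l))
    simpa [Matrix.add_apply, Matrix.mul_apply, Matrix.transpose_apply] using this
  -- integrability of frobNormSq of the increment
  have hFSq : ∀ n < N, Integrable (fun x => frobNormSq (G (n + 1) x - G n x)) μ := by
    intro n hn
    have : Integrable (fun x => ∑ i, ∑ j, ((G (n + 1) x - G n x) i j) ^ 2) μ :=
      integrable_finset_sum _ fun i _ => integrable_finset_sum _ fun j _ => hdsq n hn i j
    simpa [frobNormSq] using this
  -- integrability of frobNorm of dᵀ d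
  have hFQ : ∀ n < N,
      Integrable (fun x => frobNorm ((G (n + 1) x - G n x)ᵀ * (G (n + 1) x - G n x))) μ := by
    intro n hn
    have hmeasQ : Measurable fun x =>
        frobNorm ((G (n + 1) x - G n x)ᵀ * (G (n + 1) x - G n x)) := by
      apply Measurable.sqrt
      apply Finset.measurable_sum
      intro k _
      apply Finset.measurable_sum
      intro l _
      have : Measurable fun x =>
          (∑ j, (G (n + 1) x - G n x) j k * (G (n + 1) x - G n x) j l) := by
        apply Finset.measurable_sum
        intro j _
        exact (hdm n hn j k).mul (hdm n hn j l)
      have := this.pow_const 2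
      simpa [Matrix.mul_apply, Matrix.transpose_apply] using this
    refine Integrable.mono' (hFSq n hn) hmeasQ.aestronglyMeasurable ?_
    filter_upwards with x
    rw [Real.norm_eq_abs, abs_of_nonneg (frobNorm_nonneg _)]
    exact frobNorm_transpose_mul_self_le _
  -- the defect matrices
  set F : ℕ → ι → Matrix (Fin 2) (Fin 2) ℝ := fun n i =>
    Matrix.of (fun k l => ∫ x in T i, ((G n x)ᵀ * G n x - g x) k l ∂μ) with hF
  -- one-step identity
  have step : ∀ n < N, ∀ i : ι, F (n + 1) i = F n i +
      Matrix.of (fun k l => ∫ x in T i,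
        ((G (n + 1) x - G n x)ᵀ * (G (n + 1) x - G n x)) k l ∂μ) := by
    intro n hn i
    ext k l
    simp only [hF, Matrix.add_apply, Matrix.of_apply]
    have key : ∀ x : Ω, ((G (n + 1) x)ᵀ * G (n + 1) x - g x) k l =
        ((G n x)ᵀ * G n x - g x) k l
        + ((G (n + 1) x - G n x)ᵀ * G n x + (G n x)ᵀ * (G (n + 1) x - G n x)) k l
        + ((G (n + 1) x - G n x)ᵀ * (G (n + 1) x - G n x)) k l := by
      intro x
      have hmat : (G (n + 1) x)ᵀ * G (n + 1) x - g x =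
          ((G n x)ᵀ * G n x - g x)
          + ((G (n + 1) x - G n x)ᵀ * G n x + (G n x)ᵀ * (G (n + 1) x - G n x))
          + ((G (n + 1) x - G n x)ᵀ * (G (n + 1) x - G n x)) := by
        simp only [Matrix.transpose_sub, Matrix.sub_mul, Matrix.mul_sub]
        abel
      rw [hmat]
      simp [Matrix.add_apply]
    have hzero : ∫ x in T i,
        ((G (n + 1) x - G n x)ᵀ * G n x + (G n x)ᵀ * (G (n + 1) x - G n x)) k l ∂μ = 0 := by
      have h := congrFun (congrFun (hconstraint n hn i) k) l
      simpa using h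
    calc ∫ x in T i, ((G (n + 1) x)ᵀ * G (n + 1) x - g x) k l ∂μ
        = ∫ x in T i, (((G n x)ᵀ * G n x - g x) k l
            + ((G (n + 1) x - G n x)ᵀ * G n x + (G n x)ᵀ * (G (n + 1) x - G n x)) k l
            + ((G (n + 1) x - G n x)ᵀ * (G (n + 1) x - G n x)) k l) ∂μ :=
          integral_congr_ae (Filter.Eventually.of_forall fun x => key x)
      _ = (∫ x in T i, (((G n x)ᵀ * G n x - g x) k l
            + ((G (n + 1) x - G n x)ᵀ * G n x + (G n x)ᵀ * (G (n + 1) x - G n x)) k l) ∂μ)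
          + ∫ x in T i, ((G (n + 1) x - G n x)ᵀ * (G (n + 1) x - G n x)) k l ∂μ :=
          integral_add (((hP n hn.le k l).restrict (s := T i)).add
            ((hM n hn k l).restrict (s := T i))) ((hQ n hn k l).restrict (s := T i))
      _ = (∫ x in T i, ((G n x)ᵀ * G n x - g x) k l ∂μ)
          + (∫ x in T i,
              ((G (n + 1) x - G n x)ᵀ * G n x + (G n x)ᵀ * (G (n + 1) x - G n x)) k l ∂μ)
          + ∫ x in T i, ((G (n + 1) x - G n x)ᵀ * (G (n + 1) x - G n x)) k l ∂μ := by
          rw [integral_add ((hP n hn.le k l).restrict (s := T i)) ((hM n hn k l).restrict (s := T i))]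
      _ = (∫ x in T i, ((G n x)ᵀ * G n x - g x) k l ∂μ)
          + ∫ x in T i, ((G (n + 1) x - G n x)ᵀ * (G (n + 1) x - G n x)) k l ∂μ := by
          rw [hzero, add_zero]
  -- finite partition: sum of set integrals equals the full integral
  have hpart : ∀ {f : Ω → ℝ}, Integrable f μ → ∑ i, ∫ x in T i, f x ∂μ = ∫ x, f x ∂μ := by
    intro f hf
    have h := integral_iUnion hTmeas hTdisj (hf.integrableOn)
    rw [hTcover, Measure.restrict_univ, tsum_fintype] at h
    exact h.symm
  -- one-step inequality for the summed defect
  have stepineq : ∀ n < N,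
      ∑ i, frobNorm (F (n + 1) i) ≤
        ∑ i, frobNorm (F n i) + ∫ x, frobNormSq (G (n + 1) x - G n x) ∂μ := by
    intro n hn
    have hterm : ∀ i : ι, frobNorm (F (n + 1) i) ≤
        frobNorm (F n i) + ∫ x in T i, frobNormSq (G (n + 1) x - G n x) ∂μ := by
      intro i
      rw [step n hn i]
      refine (frobNorm_add_le _ _).trans (add_le_add_right ?_ _)
      have h1 : frobNorm (Matrix.of (fun k l => ∫ x in T i,
          ((G (n + 1) x - G n x)ᵀ * (G (n + 1) x - G n x)) k l ∂μ)) ≤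
          ∫ x in T i, frobNorm ((G (n + 1) x - G n x)ᵀ * (G (n + 1) x - G n x)) ∂μ :=
        frobNorm_integral_le (fun k l => (hQ n hn k l).restrict (s := T i))
          ((hFQ n hn).restrict (s := T i))
      refine h1.trans (integral_mono ((hFQ n hn).restrict (s := T i))
        ((hFSq n hn).restrict (s := T i)) fun x => ?_)
      exact frobNorm_transpose_mul_self_le _
    calc ∑ i, frobNorm (F (n + 1) i)
        ≤ ∑ i, (frobNorm (F n i) + ∫ x in T i, frobNormSq (G (n + 1) x - G n x) ∂μ) :=
          Finset.sum_le_sum fun i _ => hterm i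
      _ = ∑ i, frobNorm (F n i) + ∑ i, ∫ x in T i, frobNormSq (G (n + 1) x - G n x) ∂μ :=
          Finset.sum_add_distrib
      _ = ∑ i, frobNorm (F n i) + ∫ x, frobNormSq (G (n + 1) x - G n x) ∂μ := by
          rw [hpart (hFSq n hn)]
  -- induction
  have main : ∀ n, n ≤ N → ∑ i, frobNorm (F n i) ≤
      ∑ i, frobNorm (F 0 i) +
        ∑ k ∈ Finset.range n, ∫ x, frobNormSq (G (k + 1) x - G k x) ∂μ := by
    intro n
    induction n with
    | zero => intro _; simp
    | succ n ih =>
      intro hn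
      have hnN : n < N := hn
      calc ∑ i, frobNorm (F (n + 1) i)
          ≤ ∑ i, frobNorm (F n i) + ∫ x, frobNormSq (G (n + 1) x - G n x) ∂μ :=
            stepineq n hnN
        _ ≤ (∑ i, frobNorm (F 0 i) +
              ∑ k ∈ Finset.range n, ∫ x, frobNormSq (G (k + 1) x - G k x) ∂μ)
            + ∫ x, frobNormSq (G (n + 1) x - G n x) ∂μ :=
            add_le_add_left (ih hnN.le) _
        _ = ∑ i, frobNorm (F 0 i) +
            ∑ k ∈ Finset.range (n + 1), ∫ x, frobNormSq (G (k + 1) x - G k x) ∂μ := by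
            rw [Finset.sum_range_succ]; ring
  exact main N le_rfl
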